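/- Let m ≥ 1 and consider the polynomial ring R = ℂ[T, X_0, …, X_{m−1}, Y_0, …, Y_{m−1}]. Then the sequence of polynomials X_0 Y_0 − T², X_1 Y_1 − T², …, X_{m−1} Y_{m−1} − T² is a regular sequence in R. -/

import Mathlib

open MvPolynomial

section DolbeaultAux

open RingTheory.Sequence
open scoped Pointwise

/-- The quadric `X·Y − c` (with `Y` the inner variable) is a regular element of `A[Y][X]`. -/
private lemma dq_regular_q {A : Type*} [CommRing A] (c : A) :
    IsSMulRegular (Polynomial (Polynomial A))
      (Polynomial.X * Polynomial.C Polynomial.X - Polynomial.C (Polynomial.C c)) := by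
  cases subsingleton_or_nontrivial A
  · exact Function.injective_of_subsingleton _
  · have key : ∀ u : Polynomial (Polynomial A),
        (Polynomial.X * Polynomial.C Polynomial.X - Polynomial.C (Polynomial.C c)) * u = 0 →
        u = 0 := by
      intro u hu
      by_contra hu0
      have hq : (Polynomial.X * Polynomial.C Polynomial.X -
          Polynomial.C (Polynomial.C c)).leadingCoeff = Polynomial.X := by
        have h1 : Polynomial.X * Polynomial.C Polynomial.X - Polynomial.C (Polynomial.C c)
            = Polynomial.C Polynomial.X * Polynomial.X + Polynomial.C (-(Polynomial.C c)) := by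
          rw [map_neg]; ring
        rw [h1, Polynomial.leadingCoeff_linear Polynomial.X_ne_zero]
      have hX : Polynomial.X * u.leadingCoeff ≠ 0 := by
        intro h0
        apply hu0
        rw [← Polynomial.leadingCoeff_eq_zero]
        ext n
        have := congrArg (fun p => Polynomial.coeff p (n + 1)) h0
        simpa [Polynomial.coeff_X_mul] using this
      have hl : (Polynomial.X * Polynomial.C Polynomial.X -
          Polynomial.C (Polynomial.C c)).leadingCoeff * u.leadingCoeff ≠ 0 := by
        rw [hq]; exact hX
      have h2 := Polynomial.leadingCoeff_mul' hl
      rw [hu, Polynomial.leadingCoeff_zero] at h2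
      exact hl h2.symm
    intro g h hgh
    simp only [smul_eq_mul] at hgh
    exact sub_eq_zero.mp (key (g - h) (by rw [mul_sub, hgh, sub_self]))

private lemma dq_isSMulRegular_of_ringEquiv {R S : Type*} [CommRing R] [CommRing S]
    (φ : R ≃+* S) {r : R} (h : IsSMulRegular S (φ r)) : IsSMulRegular R r := by
  intro a b hab
  apply φ.injective
  apply h
  simp only [smul_eq_mul] at hab ⊢
  rw [← map_mul, ← map_mul, hab]

private lemma dq_isWeaklyRegular_of_ringEquiv {R S : Type*} [CommRing R] [CommRing S]
    (φ : R ≃+* S) {as : List R} (h : IsWeaklyRegular S (as.map φ)) : IsWeaklyRegular R as := by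
  refine (AddEquiv.isWeaklyRegular_congr (e := φ.toAddEquiv) ?_).mpr h
  refine List.forall₂_map_right_iff.mpr (List.forall₂_same.mpr fun r _ x => ?_)
  simp [smul_eq_mul, map_mul]

private lemma dq_isSMulRegular_base {A : Type*} [CommRing A] {b : A}
    (h : IsSMulRegular A b) (σ : Type*) : IsSMulRegular (MvPolynomial σ A) b := by
  intro p q hpq
  ext n
  apply h
  have := congrArg (fun r => MvPolynomial.coeff n r) hpq
  simpa [MvPolynomial.coeff_smul] using this

private lemma dq_isSMulRegular_C {A : Type*} [CommRing A] {b : A}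
    (h : IsSMulRegular A b) (σ : Type*) :
    IsSMulRegular (MvPolynomial σ A) (MvPolynomial.C b : MvPolynomial σ A) := by
  intro p q hpq
  apply dq_isSMulRegular_base h σ
  simpa [smul_eq_mul, MvPolynomial.smul_eq_C_mul] using hpq

private def dqKappa (n : ℕ) : (Fin (n+1) ⊕ Fin (n+1)) ≃ ((Fin n ⊕ Fin n) ⊕ (Unit ⊕ Unit)) :=
  (Equiv.sumCongr ((_root_.finSuccEquiv n).trans (Equiv.optionEquivSumPUnit (Fin n)))
    ((_root_.finSuccEquiv n).trans (Equiv.optionEquivSumPUnit (Fin n)))).trans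
    (Equiv.sumSumSumComm (Fin n) PUnit (Fin n) PUnit)

private lemma dqKappa_inl_zero (n : ℕ) :
    dqKappa n (Sum.inl 0) = Sum.inr (Sum.inl Unit.unit) := by
  simp [dqKappa, Equiv.sumSumSumComm]

private lemma dqKappa_inr_zero (n : ℕ) :
    dqKappa n (Sum.inr 0) = Sum.inr (Sum.inr Unit.unit) := by
  simp [dqKappa, Equiv.sumSumSumComm]

private lemma dqKappa_inl_succ (n : ℕ) (i : Fin n) :
    dqKappa n (Sum.inl i.succ) = Sum.inl (Sum.inl i) := by
  simp [dqKappa, Equiv.sumSumSumComm]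

private lemma dqKappa_inr_succ (n : ℕ) (i : Fin n) :
    dqKappa n (Sum.inr i.succ) = Sum.inl (Sum.inr i) := by
  simp [dqKappa, Equiv.sumSumSumComm]

private noncomputable def dqPhi (n : ℕ) (A : Type) [CommRing A] :
    MvPolynomial (Fin (n+1) ⊕ Fin (n+1)) A ≃+*
      MvPolynomial (Fin n ⊕ Fin n) (MvPolynomial (Unit ⊕ Unit) A) :=
  ((renameEquiv A (dqKappa n)).trans (sumAlgEquiv A _ _)).toRingEquiv

private lemma dqPhi_X_inl_succ (n : ℕ) (A : Type) [CommRing A] (i : Fin n) :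
    dqPhi n A (X (Sum.inl i.succ)) = X (Sum.inl i) := by
  simp [dqPhi, rename_X, dqKappa_inl_succ, sumAlgEquiv_X_inl, sumAlgEquiv_X_inr, sumAlgEquiv_C_inl, sumToIter_Xl]

private lemma dqPhi_X_inr_succ (n : ℕ) (A : Type) [CommRing A] (i : Fin n) :
    dqPhi n A (X (Sum.inr i.succ)) = X (Sum.inr i) := by
  simp [dqPhi, rename_X, dqKappa_inr_succ, sumAlgEquiv_X_inl, sumAlgEquiv_X_inr, sumAlgEquiv_C_inl, sumToIter_Xl]

private lemma dqPhi_C (n : ℕ) (A : Type) [CommRing A] (c : A) :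
    dqPhi n A (C c) = C (C c) := by
  simp [dqPhi, rename_C, sumAlgEquiv_X_inl, sumAlgEquiv_X_inr, sumAlgEquiv_C_inl, sumToIter_C]

private lemma dqPhi_f0 (n : ℕ) (A : Type) [CommRing A] (c : A) :
    dqPhi n A (X (Sum.inl 0) * X (Sum.inr 0) - C c) =
      C (X (Sum.inl Unit.unit) * X (Sum.inr Unit.unit) - C c) := by
  simp [dqPhi, map_sub, map_mul, rename_X, rename_C, dqKappa_inl_zero, dqKappa_inr_zero,
    sumAlgEquiv_X_inl, sumAlgEquiv_X_inr, sumAlgEquiv_C_inl, sumToIter_Xr, sumToIter_C]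

private noncomputable def dqPsi (A : Type) [CommRing A] :
    MvPolynomial (Unit ⊕ Unit) A ≃+* Polynomial (Polynomial A) :=
  (sumAlgEquiv A Unit Unit).toRingEquiv.trans
    ((MvPolynomial.pUnitAlgEquiv (MvPolynomial Unit A)).toRingEquiv.trans
      (Polynomial.mapEquiv (MvPolynomial.pUnitAlgEquiv A).toRingEquiv))

private lemma dqPsi_b0 (A : Type) [CommRing A] (c : A) :
    dqPsi A (X (Sum.inl Unit.unit) * X (Sum.inr Unit.unit) - C c) =
      Polynomial.X * Polynomial.C Polynomial.X - Polynomial.C (Polynomial.C c) := by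
  simp [dqPsi, map_sub, map_mul, sumAlgEquiv_X_inl, sumAlgEquiv_X_inr, sumAlgEquiv_C_inl, sumToIter_Xl, sumToIter_Xr, sumToIter_C,
    Polynomial.mapEquiv_apply]

private lemma dq_comap_span_singleton {R S : Type*} [CommRing R] [CommRing S]
    (φ : R ≃+* S) (x : R) :
    Ideal.comap φ.toRingHom (Ideal.span {φ x}) = Ideal.span {x} := by
  ext y
  simp only [Ideal.mem_comap, Ideal.mem_span_singleton, RingEquiv.toRingHom_eq_coe,
    RingHom.coe_coe]
  constructor
  · rintro ⟨d, hd⟩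
    exact ⟨φ.symm d, by apply φ.injective; rw [hd, map_mul, RingEquiv.apply_symm_apply]⟩
  · rintro ⟨d, rfl⟩
    exact ⟨φ d, by rw [map_mul]⟩

set_option maxHeartbeats 4000000 in
set_option synthInstance.maxHeartbeats 400000 in
private lemma dq_key (n : ℕ) : ∀ (A : Type) [CommRing A] (c : A),
    IsWeaklyRegular (MvPolynomial (Fin n ⊕ Fin n) A)
      (List.ofFn fun i : Fin n =>
        (X (Sum.inl i) * X (Sum.inr i) - C c : MvPolynomial (Fin n ⊕ Fin n) A)) := by
  induction n with
  | zero =>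
    intro A _ c
    rw [List.ofFn_zero]
    exact IsWeaklyRegular.nil _ _
  | succ n ih =>
    intro A _ c
    set R := MvPolynomial (Fin (n+1) ⊕ Fin (n+1)) A with hR
    set B := MvPolynomial (Unit ⊕ Unit) A with hB
    set f0 : R := X (Sum.inl 0) * X (Sum.inr 0) - C c with hf0
    set b0 : B := X (Sum.inl Unit.unit) * X (Sum.inr Unit.unit) - C c with hb0def
    have hb0 : IsSMulRegular B b0 :=
      dq_isSMulRegular_of_ringEquiv (dqPsi A) (by rw [hb0def, dqPsi_b0]; exact dq_regular_q c)
    have head : IsSMulRegular R f0 :=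
      dq_isSMulRegular_of_ringEquiv (dqPhi n A)
        (by rw [hf0, dqPhi_f0]; exact dq_isSMulRegular_C hb0 _)
    rw [List.ofFn_succ]
    refine IsWeaklyRegular.cons head ?_
    set J : Ideal B := Ideal.span {b0} with hJ
    set ψ : R →+* MvPolynomial (Fin n ⊕ Fin n) (B ⧸ J) :=
      (MvPolynomial.map (Ideal.Quotient.mk J)).comp (dqPhi n A).toRingHom with hψ
    have hsurj : Function.Surjective ψ :=
      (MvPolynomial.map_surjective _ Ideal.Quotient.mk_surjective).comp (dqPhi n A).surjective
    have hker : RingHom.ker ψ = Ideal.span {f0} := by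
      rw [hψ, ← RingHom.comap_ker, MvPolynomial.ker_map, Ideal.mk_ker, hJ, Ideal.map_span,
        Set.image_singleton, ← dqPhi_f0 n A c, ← hf0, dq_comap_span_singleton]
    have heq : f0 • (⊤ : Submodule R R) = Ideal.span {f0} := by
      rw [← Submodule.ideal_span_singleton_smul, Ideal.smul_eq_mul, Ideal.mul_top]
    rw [(Submodule.quotEquivOfEq _ _ (heq.trans hker.symm)).isWeaklyRegular_congr]
    letI e : (MvPolynomial (Fin (n+1) ⊕ Fin (n+1)) A ⧸ RingHom.ker ψ) ≃+
        MvPolynomial (Fin n ⊕ Fin n) (B ⧸ J) :=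
      (RingHom.quotientKerEquivOfSurjective hsurj).toAddEquiv
    have hmk : ∀ z : R, e (Ideal.Quotient.mk (RingHom.ker ψ) z) = ψ z := fun z =>
      RingHom.kerLift_mk ψ z
    have he : ∀ (a : R) (x : MvPolynomial (Fin (n+1) ⊕ Fin (n+1)) A ⧸ RingHom.ker ψ),
        e (a • x) = ψ a • e x := by
      intro a x
      obtain ⟨y, rfl⟩ := Ideal.Quotient.mk_surjective x
      have : a • (Ideal.Quotient.mk (RingHom.ker ψ) y) = Ideal.Quotient.mk _ (a * y) := rfl
      rw [this, hmk, hmk, smul_eq_mul, map_mul]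
    refine (AddEquiv.isWeaklyRegular_congr (e := { toEquiv := e.toEquiv, map_add' := fun a b => e.map_add a b })
      (bs := (List.ofFn fun i : Fin n =>
          (X (Sum.inl i.succ) * X (Sum.inr i.succ) - C c : R)).map ψ)
      (List.forall₂_map_right_iff.mpr (List.forall₂_same.mpr fun r _ x => by exact he r x))).mpr ?_
    have hmap : (List.ofFn fun i : Fin n =>
          (X (Sum.inl i.succ) * X (Sum.inr i.succ) - C c : R)).map ψ
        = List.ofFn fun i : Fin n =>
          (X (Sum.inl i) * X (Sum.inr i) - C (Ideal.Quotient.mk J (C c)) :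
            MvPolynomial (Fin n ⊕ Fin n) (B ⧸ J)) := by
      rw [List.map_ofFn]
      refine congrArg _ (funext fun i => ?_)
      simp only [hψ, RingHom.coe_comp, Function.comp_apply, RingEquiv.toRingHom_eq_coe,
        RingHom.coe_coe, map_sub, map_mul]
      rw [dqPhi_X_inl_succ n A i, dqPhi_X_inr_succ n A i, dqPhi_C n A c]
      simp only [MvPolynomial.map_X, MvPolynomial.map_C]
    rw [hmap]
    exact ih (B ⧸ J) (Ideal.Quotient.mk J (C c))

end DolbeaultAux

/-- In the polynomial ring `ℂ[T, X_0, …, X_{m−1}, Y_0, …, Y_{m−1}]`, the sequence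
`X_0 Y_0 − T², …, X_{m−1} Y_{m−1} − T²` is a regular sequence. -/
theorem dolbeault_quadrics_regular_sequence (m : ℕ) (hm : 1 ≤ m) :
    RingTheory.Sequence.IsRegular (MvPolynomial (Option (Fin m ⊕ Fin m)) ℂ)
      (List.ofFn fun i : Fin m =>
        (X (some (Sum.inl i)) * X (some (Sum.inr i)) - (X none) ^ 2 :
          MvPolynomial (Option (Fin m ⊕ Fin m)) ℂ)) := by
  constructor
  · -- weak regularity
    refine dq_isWeaklyRegular_of_ringEquiv
      (optionEquivRight ℂ (Fin m ⊕ Fin m)).toRingEquiv ?_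
    have hmap : (List.ofFn fun i : Fin m =>
          (X (some (Sum.inl i)) * X (some (Sum.inr i)) - (X none) ^ 2 :
            MvPolynomial (Option (Fin m ⊕ Fin m)) ℂ)).map
          (optionEquivRight ℂ (Fin m ⊕ Fin m)).toRingEquiv
        = List.ofFn fun i : Fin m =>
          (X (Sum.inl i) * X (Sum.inr i) - C (Polynomial.X ^ 2) :
            MvPolynomial (Fin m ⊕ Fin m) (Polynomial ℂ)) := by
      rw [List.map_ofFn]
      refine congrArg _ (funext fun i => ?_)
      simp only [Function.comp_apply, AlgEquiv.toRingEquiv_eq_coe, AlgEquiv.coe_ringEquiv,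
        map_sub, map_mul, map_pow, optionEquivRight_X_some, optionEquivRight_X_none]
    rw [hmap]
    exact dq_key m (Polynomial ℂ) (Polynomial.X ^ 2)
  · -- the ideal is proper
    intro htop
    rw [Ideal.smul_eq_mul, Ideal.mul_top] at htop
    have h1 : (1 : MvPolynomial (Option (Fin m ⊕ Fin m)) ℂ) ∈
        Ideal.ofList (List.ofFn fun i : Fin m =>
          (X (some (Sum.inl i)) * X (some (Sum.inr i)) - (X none) ^ 2 :
            MvPolynomial (Option (Fin m ⊕ Fin m)) ℂ)) := htop ▸ Submodule.mem_top
    have hle : Ideal.ofList (List.ofFn fun i : Fin m =>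
          (X (some (Sum.inl i)) * X (some (Sum.inr i)) - (X none) ^ 2 :
            MvPolynomial (Option (Fin m ⊕ Fin m)) ℂ)) ≤
        RingHom.ker (MvPolynomial.aeval (fun _ => (0 : ℂ))).toRingHom := by
      rw [Ideal.span_le]
      rintro g hg
      rw [Set.mem_setOf_eq, List.mem_ofFn] at hg
      obtain ⟨i, rfl⟩ := hg
      simp [RingHom.mem_ker]
    have := hle h1
    rw [RingHom.mem_ker, map_one] at this
    exact one_ne_zero this
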